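/- Let B ∈ R^{n×n}. Then σ_min(B) ≥ min_{1≤k≤n} (1/2)(√(4|b_{kk}|² + (r_k(B) - c_k(B))²) - (r_k(B) + c_k(B))), where r_k(B) = Σ_{j≠k} |b_{kj}| and c_k(B) = Σ_{j≠k} |b_{jk}|. -/

import Mathlib

open Matrix Finset

private lemma hp_aux1 (s a r P Q : ℝ) (hs : 0 ≤ s) (ha : 0 ≤ a) (hr : 0 ≤ r)
    (hP : 0 ≤ P) (hQ : 0 ≤ Q) (hCS : P ^ 2 ≤ r * Q) :
    (s * a + P) ^ 2 ≤ (s + r) * (s * a ^ 2 + Q) := by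
  have hsq : (2 * a * P) ^ 2 ≤ (r * a ^ 2 + Q) ^ 2 := by
    nlinarith [sq_nonneg (r * a ^ 2 - Q), mul_le_mul_of_nonneg_left hCS (sq_nonneg a)]
  have h2 : 2 * a * P ≤ r * a ^ 2 + Q := by
    have := Real.sqrt_le_sqrt hsq
    rwa [Real.sqrt_sq (by positivity), Real.sqrt_sq (by positivity)] at this
  nlinarith [mul_nonneg hs (sub_nonneg.mpr h2), hCS]

/-- Weighted Cauchy–Schwarz on a finset. -/
private lemma hp_cs {ι : Type*} (t : Finset ι) (w x : ι → ℝ) (hw : ∀ j ∈ t, 0 ≤ w j) :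
    (∑ j ∈ t, w j * |x j|) ^ 2 ≤ (∑ j ∈ t, w j) * (∑ j ∈ t, w j * (x j) ^ 2) := by
  have h := Finset.sum_mul_sq_le_sq_mul_sq t (fun j => Real.sqrt (w j))
      (fun j => Real.sqrt (w j) * |x j|)
  have e1 : ∀ j ∈ t, Real.sqrt (w j) * (Real.sqrt (w j) * |x j|) = w j * |x j| := by
    intro j hj; rw [← mul_assoc, Real.mul_self_sqrt (hw j hj)]
  have e2 : ∀ j ∈ t, Real.sqrt (w j) ^ 2 = w j := fun j hj => Real.sq_sqrt (hw j hj)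
  have e3 : ∀ j ∈ t, (Real.sqrt (w j) * |x j|) ^ 2 = w j * (x j) ^ 2 := by
    intro j hj; rw [mul_pow, Real.sq_sqrt (hw j hj), sq_abs]
  rwa [Finset.sum_congr rfl e1, Finset.sum_congr rfl e2, Finset.sum_congr rfl e3] at h

private lemma hp_row {n : ℕ} (B : Matrix (Fin n) (Fin n) ℝ) (s : ℝ) (hs : 0 ≤ s)
    (v u : Fin n → ℝ) (h1 : ∀ k, ∑ j, B k j * v j = s * u k) (k : Fin n) :
    (B k k) ^ 2 * (v k) ^ 2 ≤
      (s + ∑ j ∈ Finset.univ.erase k, |B k j|) *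
        (s * (u k) ^ 2 + ∑ j ∈ Finset.univ.erase k, |B k j| * (v j) ^ 2) := by
  set r : ℝ := ∑ j ∈ Finset.univ.erase k, |B k j| with hrdef
  have hr0 : 0 ≤ r := Finset.sum_nonneg fun j _ => abs_nonneg _
  have hsplit : B k k * v k + ∑ j ∈ Finset.univ.erase k, B k j * v j = s * u k := by
    have h : ∑ j ∈ Finset.univ.erase k, B k j * v j + B k k * v k = ∑ j, B k j * v j :=
      Finset.sum_erase_add Finset.univ (fun j => B k j * v j) (Finset.mem_univ k)
    linarith [h1 k, h]
  have habs : |B k k| * |v k| ≤ s * |u k| + ∑ j ∈ Finset.univ.erase k, |B k j| * |v j| := by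
    have heq : B k k * v k = s * u k - ∑ j ∈ Finset.univ.erase k, B k j * v j := by
      linarith [hsplit]
    calc |B k k| * |v k| = |B k k * v k| := (abs_mul _ _).symm
      _ = |s * u k - ∑ j ∈ Finset.univ.erase k, B k j * v j| := by rw [heq]
      _ ≤ |s * u k| + |∑ j ∈ Finset.univ.erase k, B k j * v j| := abs_sub _ _
      _ ≤ s * |u k| + ∑ j ∈ Finset.univ.erase k, |B k j| * |v j| := by
          gcongr
          · rw [abs_mul, abs_of_nonneg hs]
          · exact (Finset.abs_sum_le_sum_abs _ _).trans (le_of_eq (Finset.sum_congr rfl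
              fun j _ => abs_mul _ _))
  have hCS := hp_cs (Finset.univ.erase k) (fun j => |B k j|) v (fun j _ => abs_nonneg _)
  have h2' := hp_aux1 s |u k| r (∑ j ∈ Finset.univ.erase k, |B k j| * |v j|)
    (∑ j ∈ Finset.univ.erase k, |B k j| * (v j) ^ 2) hs (abs_nonneg _) hr0
    (Finset.sum_nonneg fun j _ => mul_nonneg (abs_nonneg _) (abs_nonneg _))
    (Finset.sum_nonneg fun j _ => mul_nonneg (abs_nonneg _) (sq_nonneg _)) hCS
  calc (B k k) ^ 2 * (v k) ^ 2 = (|B k k| * |v k|) ^ 2 := by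
        rw [mul_pow, sq_abs, sq_abs]
    _ ≤ (s * |u k| + ∑ j ∈ Finset.univ.erase k, |B k j| * |v j|) ^ 2 :=
        pow_le_pow_left₀ (by positivity) habs 2
    _ ≤ (s + r) * (s * |u k| ^ 2 + ∑ j ∈ Finset.univ.erase k, |B k j| * (v j) ^ 2) := h2'
    _ = (s + r) * (s * (u k) ^ 2 + ∑ j ∈ Finset.univ.erase k, |B k j| * (v j) ^ 2) := by
        rw [sq_abs]

/-- Quantitative Ostrowski-type step. -/
private lemma hp_core {n : ℕ} (B : Matrix (Fin n) (Fin n) ℝ) (s : ℝ) (hs : 0 ≤ s)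
    (v u : Fin n → ℝ) (hv : v ≠ 0)
    (h1 : ∀ k, ∑ j, B k j * v j = s * u k)
    (h2 : ∀ k, ∑ j, B j k * u j = s * v k) :
    ∃ k, (B k k) ^ 2 ≤ (s + ∑ j ∈ Finset.univ.erase k, |B k j|) *
        (s + ∑ j ∈ Finset.univ.erase k, |B j k|) := by
  by_contra hcon
  push_neg at hcon
  set r : Fin n → ℝ := fun k => ∑ j ∈ Finset.univ.erase k, |B k j| with hrdef
  set c : Fin n → ℝ := fun k => ∑ j ∈ Finset.univ.erase k, |B j k| with hcdef
  have hr0 : ∀ k, 0 ≤ r k := fun k => Finset.sum_nonneg fun j _ => abs_nonneg _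
  have hc0 : ∀ k, 0 ≤ c k := fun k => Finset.sum_nonneg fun j _ => abs_nonneg _
  have key1 : ∀ k, (B k k) ^ 2 * (v k) ^ 2 ≤
      (s + r k) * (s * (u k) ^ 2 + ∑ j ∈ Finset.univ.erase k, |B k j| * (v j) ^ 2) :=
    fun k => hp_row B s hs v u h1 k
  have key2 : ∀ k, (B k k) ^ 2 * (u k) ^ 2 ≤
      (s + c k) * (s * (v k) ^ 2 + ∑ j ∈ Finset.univ.erase k, |B j k| * (u j) ^ 2) := by
    intro k
    have h2' : ∀ k, ∑ j, Bᵀ k j * u j = s * v k := fun k => h2 k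
    exact hp_row Bᵀ s hs u v h2' k
  -- nonstrict per-index inequalities, strict where v k ≠ 0
  have hA : ∀ k, (s + c k) * (v k) ^ 2 ≤
      s * (u k) ^ 2 + ∑ j ∈ Finset.univ.erase k, |B k j| * (v j) ^ 2 := by
    intro k
    rcases eq_or_ne (v k) 0 with hvk | hvk
    · rw [hvk]
      have : (0:ℝ) ≤ s * (u k) ^ 2 + ∑ j ∈ Finset.univ.erase k, |B k j| * (v j) ^ 2 := by
        have := Finset.sum_nonneg (fun j (_ : j ∈ Finset.univ.erase k) =>
          mul_nonneg (abs_nonneg (B k j)) (sq_nonneg (v j)))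
        nlinarith [mul_nonneg hs (sq_nonneg (u k))]
      simpa using this
    · have hvk2 : 0 < (v k) ^ 2 := by positivity
      have hlt := hcon k
      have hkey := key1 k
      have hsr : 0 < s + r k := by
        by_contra hsr
        push_neg at hsr
        have hsr0 : s + r k = 0 := le_antisymm hsr (by positivity)
        rw [hsr0, zero_mul] at hkey
        have : (B k k) ^ 2 * (v k) ^ 2 = 0 :=
          le_antisymm hkey (by positivity)
        have hb : (B k k) ^ 2 > 0 := by
          rw [hsr0, zero_mul] at hlt; exact hlt
        nlinarith
      nlinarith [hkey, mul_le_mul_of_nonneg_right hlt.le hvk2.le, hvk2, hsr,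
        mul_lt_mul_of_pos_right hlt hvk2]
  have hAs : ∀ k, v k ≠ 0 → (s + c k) * (v k) ^ 2 <
      s * (u k) ^ 2 + ∑ j ∈ Finset.univ.erase k, |B k j| * (v j) ^ 2 := by
    intro k hvk
    have hvk2 : 0 < (v k) ^ 2 := by positivity
    have hlt := hcon k
    have hkey := key1 k
    have hsr : 0 < s + r k := by
      by_contra hsr
      push_neg at hsr
      have hsr0 : s + r k = 0 := le_antisymm hsr (by positivity)
      rw [hsr0, zero_mul] at hkey
      have : (B k k) ^ 2 * (v k) ^ 2 = 0 := le_antisymm hkey (by positivity)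
      have hb : (B k k) ^ 2 > 0 := by rw [hsr0, zero_mul] at hlt; exact hlt
      nlinarith
    have h1' : (s + r k) * ((s + c k) * (v k) ^ 2) < (s + r k) *
        (s * (u k) ^ 2 + ∑ j ∈ Finset.univ.erase k, |B k j| * (v j) ^ 2) := by
      calc (s + r k) * ((s + c k) * (v k) ^ 2)
          = ((s + r k) * (s + c k)) * (v k) ^ 2 := by ring
        _ < (B k k) ^ 2 * (v k) ^ 2 := mul_lt_mul_of_pos_right hlt hvk2
        _ ≤ _ := hkey
    exact lt_of_mul_lt_mul_left h1' hsr.le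
  have hB : ∀ k, (s + r k) * (u k) ^ 2 ≤
      s * (v k) ^ 2 + ∑ j ∈ Finset.univ.erase k, |B j k| * (u j) ^ 2 := by
    intro k
    rcases eq_or_ne (u k) 0 with huk | huk
    · rw [huk]
      have h0 : (0:ℝ) ≤ ∑ j ∈ Finset.univ.erase k, |B j k| * (u j) ^ 2 :=
        Finset.sum_nonneg fun j _ => mul_nonneg (abs_nonneg _) (sq_nonneg _)
      nlinarith [mul_nonneg hs (sq_nonneg (v k))]
    · have huk2 : 0 < (u k) ^ 2 := by positivity
      have hlt := hcon k
      have hkey := key2 k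
      have hsc : 0 < s + c k := by
        by_contra hsc
        push_neg at hsc
        have hsc0 : s + c k = 0 := le_antisymm hsc (by positivity)
        rw [hsc0, zero_mul] at hkey
        have : (B k k) ^ 2 * (u k) ^ 2 = 0 := le_antisymm hkey (by positivity)
        have hb : (B k k) ^ 2 > 0 := by rw [hsc0, mul_zero] at hlt; exact hlt
        nlinarith
      have h1' : (s + c k) * ((s + r k) * (u k) ^ 2) < (s + c k) *
          (s * (v k) ^ 2 + ∑ j ∈ Finset.univ.erase k, |B j k| * (u j) ^ 2) := by
        calc (s + c k) * ((s + r k) * (u k) ^ 2)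
            = ((s + r k) * (s + c k)) * (u k) ^ 2 := by ring
          _ < (B k k) ^ 2 * (u k) ^ 2 := mul_lt_mul_of_pos_right hlt huk2
          _ ≤ _ := hkey
      exact (lt_of_mul_lt_mul_left h1' hsc.le).le
  -- sum up
  obtain ⟨k₀, hk₀⟩ : ∃ k, v k ≠ 0 := by
    by_contra h
    push_neg at h
    exact hv (funext h)
  have hsum : ∑ k, ((s + c k) * (v k) ^ 2 + (s + r k) * (u k) ^ 2) <
      ∑ k, ((s * (u k) ^ 2 + ∑ j ∈ Finset.univ.erase k, |B k j| * (v j) ^ 2) +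
        (s * (v k) ^ 2 + ∑ j ∈ Finset.univ.erase k, |B j k| * (u j) ^ 2)) := by
    apply Finset.sum_lt_sum
    · intro k _
      exact add_le_add (hA k) (hB k)
    · exact ⟨k₀, Finset.mem_univ k₀, add_lt_add_of_lt_of_le (hAs k₀ hk₀) (hB k₀)⟩
  -- but the two sums are equal
  have swap1 : ∑ k, ∑ j ∈ Finset.univ.erase k, |B k j| * (v j) ^ 2
      = ∑ j, c j * (v j) ^ 2 := by
    rw [Finset.sum_comm' (s := Finset.univ) (t := fun k => Finset.univ.erase k)
      (t' := Finset.univ) (s' := fun j => Finset.univ.erase j) (fun x y => by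
      simp only [Finset.mem_univ, Finset.mem_erase, true_and, and_true, ne_eq]
      exact ne_comm)]
    refine Finset.sum_congr rfl fun j _ => ?_
    rw [hcdef, ← Finset.sum_mul]
  have swap2 : ∑ k, ∑ j ∈ Finset.univ.erase k, |B j k| * (u j) ^ 2
      = ∑ j, r j * (u j) ^ 2 := by
    rw [Finset.sum_comm' (s := Finset.univ) (t := fun k => Finset.univ.erase k)
      (t' := Finset.univ) (s' := fun j => Finset.univ.erase j) (fun x y => by
      simp only [Finset.mem_univ, Finset.mem_erase, true_and, and_true, ne_eq]
      exact ne_comm)]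
    refine Finset.sum_congr rfl fun j _ => ?_
    rw [hrdef, ← Finset.sum_mul]
  have expand : ∑ k, ((s + c k) * (v k) ^ 2 + (s + r k) * (u k) ^ 2)
      = ∑ k, ((s * (u k) ^ 2 + ∑ j ∈ Finset.univ.erase k, |B k j| * (v j) ^ 2) +
        (s * (v k) ^ 2 + ∑ j ∈ Finset.univ.erase k, |B j k| * (u j) ^ 2)) := by
    rw [Finset.sum_add_distrib, Finset.sum_add_distrib, Finset.sum_add_distrib,
      Finset.sum_add_distrib, swap1, swap2]
    simp only [add_mul]
    rw [Finset.sum_add_distrib, Finset.sum_add_distrib]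
    ring
  rw [expand] at hsum
  exact lt_irrefl _ hsum


private lemma hp_spectral {n : ℕ} (hn : 0 < n) (B : Matrix (Fin n) (Fin n) ℝ) :
    ∃ (s : ℝ) (v u : Fin n → ℝ), 0 ≤ s ∧ v ≠ 0 ∧
      (∀ k, ∑ j, B k j * v j = s * u k) ∧
      (∀ k, ∑ j, B j k * u j = s * v k) ∧
      (∀ x : EuclideanSpace ℝ (Fin n), s * ‖x‖ ≤ ‖Matrix.toEuclideanLin B x‖) := by
  classical
  set E := EuclideanSpace ℝ (Fin n)
  set L : E →L[ℝ] E := LinearMap.toContinuousLinearMap (Matrix.toEuclideanLin B) with hL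
  set T : E →L[ℝ] E := (ContinuousLinearMap.adjoint L).comp L with hT
  have hTsa : IsSelfAdjoint T := by
    rw [ContinuousLinearMap.isSelfAdjoint_iff']
    rw [hT, ContinuousLinearMap.adjoint_comp, ContinuousLinearMap.adjoint_adjoint]
  have hre : ∀ x : E, T.reApplyInnerSelf x = ‖L x‖ ^ 2 := by
    intro x
    rw [ContinuousLinearMap.reApplyInnerSelf_apply]
    rw [hT]
    simp only [ContinuousLinearMap.coe_comp', Function.comp_apply]
    rw [ContinuousLinearMap.adjoint_inner_left]
    rw [real_inner_self_eq_norm_sq]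
    simp
  have H₁ : IsCompact (Metric.sphere (0 : E) 1) := isCompact_sphere _ _
  have H₂ : (Metric.sphere (0 : E) 1).Nonempty := by
    refine ⟨EuclideanSpace.single ⟨0, hn⟩ (1 : ℝ), ?_⟩
    rw [mem_sphere_zero_iff_norm, EuclideanSpace.norm_single, norm_one]
  obtain ⟨x₀, hx₀s, hmin⟩ := H₁.exists_isMinOn H₂ T.reApplyInnerSelf_continuous.continuousOn
  have hx₀n : ‖x₀‖ = 1 := mem_sphere_zero_iff_norm.mp hx₀s
  have hx₀ : x₀ ≠ 0 := by
    intro h; rw [h, norm_zero] at hx₀n; exact zero_ne_one hx₀n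
  have heig := hTsa.hasEigenvector_of_isMinOn hx₀ (by rwa [hx₀n])
  set μ : ℝ := ⨅ x : { x : E // x ≠ 0 }, T.rayleighQuotient x with hμ
  have happ : T x₀ = μ • x₀ := Module.End.mem_eigenspace_iff.mp heig.1
  set s : ℝ := ‖L x₀‖ with hs
  have hs0 : 0 ≤ s := norm_nonneg _
  have hμs : μ = s ^ 2 := by
    have h1 : T.reApplyInnerSelf x₀ = μ := by
      rw [ContinuousLinearMap.reApplyInnerSelf_apply, happ, real_inner_smul_left,
        real_inner_self_eq_norm_sq, hx₀n]
      simp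
    rw [← h1, hre]
  -- global lower bound
  have hbound : ∀ x : E, s * ‖x‖ ≤ ‖L x‖ := by
    intro x
    rcases eq_or_ne x 0 with rfl | hx
    · simp
    · have hxn : (0:ℝ) < ‖x‖ := norm_pos_iff.mpr hx
      have hmem : (‖x‖⁻¹ • x) ∈ Metric.sphere (0 : E) 1 := by
        rw [mem_sphere_zero_iff_norm, norm_smul, norm_inv, norm_norm,
          inv_mul_cancel₀ hxn.ne']
      have h1 : ‖L x₀‖ ^ 2 ≤ ‖L (‖x‖⁻¹ • x)‖ ^ 2 := by
        have h0 := hmin hmem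
        simp only [Set.mem_setOf_eq] at h0
        rwa [hre, hre] at h0
      have h2 : ‖L (‖x‖⁻¹ • x)‖ = ‖x‖⁻¹ * ‖L x‖ := by
        rw [_root_.map_smul, norm_smul, norm_inv, norm_norm]
      rw [h2] at h1
      have h3 : s ^ 2 * ‖x‖ ^ 2 ≤ ‖L x‖ ^ 2 := by
        have := mul_le_mul_of_nonneg_left h1 (sq_nonneg ‖x‖)
        calc s ^ 2 * ‖x‖ ^ 2 = ‖x‖ ^ 2 * ‖L x₀‖ ^ 2 := by ring
          _ ≤ ‖x‖ ^ 2 * (‖x‖⁻¹ * ‖L x‖) ^ 2 := this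
          _ = ‖L x‖ ^ 2 := by
              field_simp
      have := Real.sqrt_le_sqrt h3
      rwa [← mul_pow, Real.sqrt_sq (by positivity), Real.sqrt_sq (norm_nonneg _)] at this
  -- coordinates
  set y : Fin n → ℝ := fun k => ∑ j, B k j * x₀ j with hy
  have hLx₀ : ∀ k, (L x₀ : EuclideanSpace ℝ (Fin n)) k = y k := by
    intro k
    rfl
  have hadj : ∀ k, ∑ j, B j k * y j = s ^ 2 * x₀ k := by
    intro k
    have h1 : (ContinuousLinearMap.adjoint L) (L x₀) = T x₀ := rfl
    have h2 : (ContinuousLinearMap.adjoint L) (L x₀) = Matrix.toEuclideanLin Bᵀ (L x₀) := by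
      have e1 : (ContinuousLinearMap.adjoint L : E →ₗ[ℝ] E) =
          LinearMap.adjoint (Matrix.toEuclideanLin B) := by
        rw [LinearMap.adjoint_eq_toCLM_adjoint]
      have e2 : LinearMap.adjoint (Matrix.toEuclideanLin B) = Matrix.toEuclideanLin Bᵀ := by
        rw [← Matrix.toEuclideanLin_conjTranspose_eq_adjoint]
        congr 1
        all_goals ext i j <;> simp [Matrix.conjTranspose_apply]
      calc (ContinuousLinearMap.adjoint L) (L x₀)
          = (ContinuousLinearMap.adjoint L : E →ₗ[ℝ] E) (L x₀) := rfl
        _ = Matrix.toEuclideanLin Bᵀ (L x₀) := by rw [e1, e2]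
    have h3 : Matrix.toEuclideanLin Bᵀ (L x₀) = μ • x₀ := by
      rw [← h2, h1, happ]
    have h4 : (Matrix.toEuclideanLin Bᵀ (L x₀) : EuclideanSpace ℝ (Fin n)) k
        = ∑ j, B j k * y j := by
      simp only [Matrix.toEuclideanLin_apply]
      show (Bᵀ *ᵥ _) k = _
      rw [Matrix.mulVec, dotProduct]
      exact Finset.sum_congr rfl fun j _ => by rw [Matrix.transpose_apply]; rfl
    rw [← h4, h3, hμs]
    rfl
  -- choose u
  by_cases hsz : s = 0
  · refine ⟨0, (fun k => x₀ k), 0, le_refl 0, ?_, ?_, ?_, ?_⟩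
    · intro h
      apply hx₀
      ext k
      exact congrFun h k
    · intro k
      have hn0 : ‖L x₀‖ = 0 := by rw [← hs, hsz]
      have hL0 : L x₀ = 0 := norm_eq_zero.mp hn0
      have hyk : y k = 0 := by rw [← hLx₀ k, hL0]; rfl
      simpa using hyk
    · intro k
      simp
    · intro x
      simpa using hbound x
  · refine ⟨s, (fun k => x₀ k), (fun k => s⁻¹ * y k), hs0, ?_, ?_, ?_, ?_⟩
    · intro h
      apply hx₀
      ext k
      exact congrFun h k
    · intro k
      have he : s * (s⁻¹ * y k) = y k := by field_simp
      rw [he]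
    · intro k
      have : ∑ j, B j k * (s⁻¹ * y j) = s⁻¹ * ∑ j, B j k * y j := by
        rw [Finset.mul_sum]
        exact Finset.sum_congr rfl fun j _ => by ring
      rw [this, hadj k]
      field_simp
    · intro x
      exact hbound x


/-- Hong–Pan lower bound: for a square real matrix `B`,
`σ_min(B) ≥ min_k (1/2)(√(4|b_kk|² + (r_k - c_k)²) - (r_k + c_k))`,
where `r_k` and `c_k` are the off-diagonal absolute row and column sums.
`σ_min(B) ≥ m` is expressed as `∀ x, m ‖x‖ ≤ ‖B x‖`. -/
theorem hong_pan_min_singular_value_bound {n : ℕ}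
    (B : Matrix (Fin n) (Fin n) ℝ) :
    ∀ x : EuclideanSpace ℝ (Fin n),
      (⨅ t : Fin n, (1 / 2 : ℝ) *
          (Real.sqrt (4 * |B t t| ^ 2 +
              ((∑ j ∈ Finset.univ.erase t, |B t j|) - ∑ j ∈ Finset.univ.erase t, |B j t|) ^ 2) -
            ((∑ j ∈ Finset.univ.erase t, |B t j|) + ∑ j ∈ Finset.univ.erase t, |B j t|))) * ‖x‖
        ≤ ‖Matrix.toEuclideanLin B x‖ := by
  intro x
  set f : Fin n → ℝ := fun t => (1 / 2 : ℝ) *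
      (Real.sqrt (4 * |B t t| ^ 2 +
          ((∑ j ∈ Finset.univ.erase t, |B t j|) - ∑ j ∈ Finset.univ.erase t, |B j t|) ^ 2) -
        ((∑ j ∈ Finset.univ.erase t, |B t j|) + ∑ j ∈ Finset.univ.erase t, |B j t|)) with hf
  rcases Nat.eq_zero_or_pos n with h0 | hn
  · subst h0
    rw [Real.iInf_of_isEmpty]
    simpa using norm_nonneg (Matrix.toEuclideanLin B x)
  · obtain ⟨s, v, u, hs0, hv, h1, h2, hbound⟩ := hp_spectral hn B
    obtain ⟨k, hk⟩ := hp_core B s hs0 v u hv h1 h2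
    have hinf : (⨅ t, f t) ≤ f k := ciInf_le (Finite.bddBelow_range f) k
    have hfk : f k ≤ s := by
      set r : ℝ := ∑ j ∈ Finset.univ.erase k, |B k j| with hr
      set c : ℝ := ∑ j ∈ Finset.univ.erase k, |B j k| with hc
      have hr0 : 0 ≤ r := Finset.sum_nonneg fun j _ => abs_nonneg _
      have hc0 : 0 ≤ c := Finset.sum_nonneg fun j _ => abs_nonneg _
      have hsq : 4 * |B k k| ^ 2 + (r - c) ^ 2 ≤ (2 * s + r + c) ^ 2 := by
        rw [sq_abs]
        nlinarith [hk]
      have hsqrt : Real.sqrt (4 * |B k k| ^ 2 + (r - c) ^ 2) ≤ 2 * s + r + c := by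
        have h' := Real.sqrt_le_sqrt hsq
        rwa [Real.sqrt_sq (by positivity)] at h'
      rw [hf]
      dsimp only
      rw [← hr, ← hc]
      linarith
    calc (⨅ t, f t) * ‖x‖ ≤ f k * ‖x‖ :=
          mul_le_mul_of_nonneg_right hinf (norm_nonneg x)
      _ ≤ s * ‖x‖ := mul_le_mul_of_nonneg_right hfk (norm_nonneg x)
      _ ≤ ‖Matrix.toEuclideanLin B x‖ := hbound x
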